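/- Let k be an F-finite field of characteristic p (that is, k is finitely generated as a module over its subfield k^p of p-th powers), let R be a finitely generated k-algebra, let (M,C) be a q-Cartier module over R with M finitely generated, let N ⊆ M be a finitely generated R-submodule and let f ∈ R. Then there exists a constant L ≥ 0 such that for every integer m ≥ 1, the number of integers n with 0 ≤ n < q^m and C^m(f^n N) ≠ C^m(f^{n+1} N) is at most L. -/

import Mathlib

universe u

open Pointwise Function

/-- The set of ν-invariants of level `m` of a subset `N` of a `q`-Cartier module `(M, C)`
with respect to `f`: those `n : ℕ` with `C^m(f^n N) ≠ C^m(f^{n+1} N)`. -/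
def nuLevel {R M : Type*} [CommRing R] [AddCommGroup M] [Module R M]
    (C : M → M) (f : R) (N : Set M) (m : ℕ) : Set ℕ :=
  {n | C^[m] '' (f ^ n • N) ≠ C^[m] '' (f ^ (n + 1) • N)}

theorem aux_rhfin {k : Type*} [CommRing k] (f : k →+* k) (h : f.Finite) :
    ∃ s : Finset k, ∀ c : k, ∃ g : k → k, c = ∑ b ∈ s, f (g b) * b := by
  letI : Algebra k k := f.toAlgebra
  obtain ⟨S, hS⟩ := (show @Module.Finite k k _ _ f.toAlgebra.toModule from h).fg_top
  refine ⟨S, fun c => ?_⟩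
  have hc : c ∈ @Submodule.span k k _ _ f.toAlgebra.toModule (S : Set k) := by rw [hS]; trivial
  letI : Module k k := f.toAlgebra.toModule
  obtain ⟨g, -, hg⟩ := Submodule.mem_span_finset.mp hc
  exact ⟨g, by rw [← hg]; exact Finset.sum_congr rfl fun b _ => (Algebra.smul_def _ _)⟩

theorem aux_kspan {k : Type u} [Field k] (p : ℕ) [Fact p.Prime] [CharP k p]
    (h : (frobenius k p).Finite) :
    ∀ n : ℕ, ∃ (ι : Type u) (_ : Fintype ι) (b : ι → k),
      ∀ c : k, ∃ g : ι → k, c = ∑ i, g i ^ p ^ n * b i := by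
  obtain ⟨s, hs⟩ := aux_rhfin _ h
  simp only [frobenius_def] at hs
  intro n; induction n with
  | zero => exact ⟨PUnit, inferInstance, fun _ => 1, fun c => ⟨fun _ => c, by simp⟩⟩
  | succ n ih =>
    obtain ⟨ι, _, b, hb⟩ := ih
    refine ⟨ι × {x // x ∈ s}, inferInstance, fun j => (j.2 : k) ^ p ^ n * b j.1, fun c => ?_⟩
    obtain ⟨g, hg⟩ := hb c
    choose G hG using fun i => hs (g i)
    refine ⟨fun j => G j.1 j.2, ?_⟩
    rw [Fintype.sum_prod_type, hg]
    refine Finset.sum_congr rfl fun i _ => ?_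
    rw [hG i, sum_pow_char_pow, Finset.sum_mul, ← Finset.sum_coe_sort (s := s)]
    refine Finset.sum_congr rfl fun x _ => ?_
    rw [mul_pow, ← pow_mul]
    simp only [pow_succ']
    ring

theorem aux_dec {R : Type*} [CommRing R] (s : Finset R) (Q : ℕ) (hQ : 1 ≤ Q) :
    ∀ d : ℕ, ∀ u ∈ (↑s : Set R) ^ d, ∃ (a : ℕ) (v : R) (c : R → ℕ),
      v ∈ (↑s : Set R) ^ a ∧ (∀ x, c x < Q) ∧ u = v ^ Q * ∏ x ∈ s, x ^ c x ∧
      a * Q + ∑ x ∈ s, c x = d := by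
  classical
  intro d; induction d with
  | zero =>
    intro u hu
    rw [pow_zero, Set.mem_one] at hu
    exact ⟨0, 1, fun _ => 0, by simp [Set.mem_one], fun _ => hQ, by simp [hu], by simp⟩
  | succ d ih =>
    intro u hu
    rw [pow_succ] at hu
    obtain ⟨u', hu', g, hgmem, rfl⟩ := Set.mem_mul.mp hu
    obtain ⟨a, v, c, hv, hcQ, rfl, hsum⟩ := ih u' hu'
    have hgs : g ∈ s := hgmem
    have hne : ∀ x ∈ s \ {g}, x ≠ g := fun x hx =>
      Finset.notMem_singleton.mp (Finset.mem_sdiff.mp hx).2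
    have hps : ∏ x ∈ s, x ^ c x = g ^ c g * ∏ x ∈ s \ {g}, x ^ c x :=
      Finset.prod_eq_mul_prod_sdiff_singleton g _ (fun h => absurd hgs h)
    have hss : ∑ x ∈ s, c x = c g + ∑ x ∈ s \ {g}, c x :=
      Finset.sum_eq_add_sum_sdiff_singleton g _ (fun h => absurd hgs h)
    have hupd : ∀ b : ℕ, ∏ x ∈ s, x ^ Function.update c g b x
        = g ^ b * ∏ x ∈ s \ {g}, x ^ c x := by
      intro b
      rw [Finset.prod_eq_mul_prod_sdiff_singleton g (fun x => x ^ Function.update c g b x) (fun h => absurd hgs h),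
        Function.update_self]
      congr 1
      exact Finset.prod_congr rfl fun x hx => by rw [Function.update_of_ne (hne x hx)]
    have hsupd : ∀ b : ℕ, ∑ x ∈ s, Function.update c g b x
        = b + ∑ x ∈ s \ {g}, c x := by
      intro b
      rw [Finset.sum_eq_add_sum_sdiff_singleton g (fun x => Function.update c g b x) (fun h => absurd hgs h),
        Function.update_self]
      congr 1
      exact Finset.sum_congr rfl fun x hx => by rw [Function.update_of_ne (hne x hx)]
    by_cases hcase : c g + 1 < Q
    · refine ⟨a, v, Function.update c g (c g + 1), hv, ?_, ?_, ?_⟩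
      · intro x; rcases eq_or_ne x g with rfl|hx
        · rwa [Function.update_self]
        · rw [Function.update_of_ne hx]; exact hcQ x
      · rw [hupd, hps, pow_succ]; ring
      · rw [hsupd]; rw [hss] at hsum; omega
    · have hQeq : c g + 1 = Q := by have := hcQ g; omega
      refine ⟨a + 1, v * g, Function.update c g 0, ?_, ?_, ?_, ?_⟩
      · rw [pow_succ]; exact Set.mul_mem_mul hv hgmem
      · intro x; rcases eq_or_ne x g with rfl|hx
        · rw [Function.update_self]; omega
        · rw [Function.update_of_ne hx]; exact hcQ x
      · rw [hupd, hps, mul_pow, ← hQeq, pow_succ]; ring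
      · rw [hsupd]; rw [hss] at hsum
        have hexp : (a + 1) * Q = a * Q + Q := by ring
        omega

theorem aux_C0 {M : Type*} [AddCommGroup M] {C : M → M}
    (hCadd : ∀ x y : M, C (x + y) = C x + C y) : C 0 = 0 := by
  have := hCadd 0 0
  rw [add_zero] at this
  exact right_eq_add.mp this

theorem aux_iter_add {M : Type*} [AddCommGroup M] {C : M → M}
    (hCadd : ∀ x y : M, C (x + y) = C x + C y) :
    ∀ (m : ℕ) (x y : M), C^[m] (x + y) = C^[m] x + C^[m] y := by
  intro m; induction m with
  | zero => intro x y; simp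
  | succ m ih =>
    intro x y
    rw [Function.iterate_succ_apply, Function.iterate_succ_apply,
      Function.iterate_succ_apply, hCadd, ih]

theorem aux_iter_zero {M : Type*} [AddCommGroup M] {C : M → M}
    (hCadd : ∀ x y : M, C (x + y) = C x + C y) : ∀ m : ℕ, C^[m] 0 = 0 := by
  intro m; induction m with
  | zero => simp
  | succ m ih => rw [Function.iterate_succ_apply, aux_C0 hCadd, ih]

theorem aux_sum {M : Type*} [AddCommGroup M] {C : M → M}
    (hCadd : ∀ x y : M, C (x + y) = C x + C y) {α : Type*} (t : Finset α) (F : α → M) :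
    C (∑ i ∈ t, F i) = ∑ i ∈ t, C (F i) := by
  classical
  induction t using Finset.induction_on with
  | empty => simpa using aux_C0 hCadd
  | insert _ _ hx ih => rw [Finset.sum_insert hx, Finset.sum_insert hx, hCadd, ih]

theorem aux_iter_sum {M : Type*} [AddCommGroup M] {C : M → M}
    (hCadd : ∀ x y : M, C (x + y) = C x + C y) (m : ℕ) {α : Type*} (t : Finset α) (F : α → M) :
    C^[m] (∑ i ∈ t, F i) = ∑ i ∈ t, C^[m] (F i) := by
  classical
  induction t using Finset.induction_on with
  | empty => simpa using aux_iter_zero hCadd m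
  | insert _ _ hx ih => rw [Finset.sum_insert hx, Finset.sum_insert hx, aux_iter_add hCadd, ih]

theorem aux_iter_sl {R M : Type*} [CommRing R] [AddCommGroup M] [Module R M]
    {C : M → M} {q : ℕ} (hCsl : ∀ (a : R) (x : M), C (a ^ q • x) = a • C x) :
    ∀ (m : ℕ) (a : R) (x : M), C^[m] (a ^ q ^ m • x) = a • C^[m] x := by
  intro m; induction m with
  | zero => intro a x; simp
  | succ m ih =>
    intro a x
    have h1 : a ^ q ^ (m + 1) = (a ^ q ^ m) ^ q := by rw [← pow_mul, pow_succ]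
    rw [Function.iterate_succ_apply, Function.iterate_succ_apply, h1, hCsl, ih]

theorem stmt1 {k R M : Type*} [Field k] [CommRing R] [Algebra k R]
    [AddCommGroup M] [Module R M]
    (p : ℕ) [Fact p.Prime] [CharP k p]
    (hkFF : (frobenius k p).Finite)
    (hRft : Algebra.FiniteType k R)
    (e q : ℕ) (he : 1 ≤ e) (hq : q = p ^ e)
    (C : M → M) (hCadd : ∀ x y : M, C (x + y) = C x + C y)
    (hCsl : ∀ (a : R) (x : M), C (a ^ q • x) = a • C x)
    [Module.Finite R M] (N : Submodule R M) (hNfg : N.FG) (f : R) :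
    ∃ L : ℕ, ∀ m : ℕ, 1 ≤ m →
      {n : ℕ | n < q ^ m ∧ n ∈ nuLevel C f (N : Set M) m}.ncard ≤ L := by
  classical
  -- basic numerics
  have hp2 : 2 ≤ p := (Fact.out : p.Prime).two_le
  have hq2 : 2 ≤ q := by
    rw [hq]
    calc 2 = 2 ^ 1 := (pow_one 2).symm
    _ ≤ p ^ 1 := Nat.pow_le_pow_left hp2 1
    _ ≤ p ^ e := Nat.pow_le_pow_right (le_trans one_le_two hp2) he
  have hq0 : 0 < q := by omega
  -- the k-module structure on M
  letI instkM : Module k M := Module.compHom M (algebraMap k R)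
  have halgsmul : ∀ (c : k) (m : M), c • m = (algebraMap k R c) • m := fun _ _ => rfl
  haveI : IsScalarTower k R M := ⟨fun c r m => by
    rw [halgsmul, Algebra.smul_def, mul_smul]⟩
  haveI : SMulCommClass R k M := ⟨fun r c m => by
    rw [halgsmul, halgsmul, ← mul_smul, mul_comm, mul_smul]⟩
  haveI : SMulCommClass k R M := SMulCommClass.symm R k M
  -- generators
  obtain ⟨G, hGtop⟩ := hRft.out
  obtain ⟨Y1, hY1⟩ := Module.Finite.fg_top (R := R) (M := M)
  obtain ⟨Y2, hY2⟩ := hNfg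
  set sfin : Finset R := insert (1 : R) G with hsfin
  set sset : Set R := (↑sfin : Set R) with hsset
  have h1s : (1 : R) ∈ sset := by simp [hsset, hsfin]
  set γ : ℕ := sfin.card with hγ
  set Xf : Finset M := Y1 ∪ Y2 with hXf
  set Xs : Set M := (↑Xf : Set M) with hXs
  -- the filtrations
  set Rd : ℕ → Submodule k R := fun d => Submodule.span k (sset ^ d) with hRd
  set Md : ℕ → Submodule k M :=
    fun d => Submodule.span k (Set.image2 (· • ·) (sset ^ d) Xs) with hMd
  have hRdmono : ∀ {a b : ℕ}, a ≤ b → Rd a ≤ Rd b := fun hab =>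
    Submodule.span_mono (Set.pow_subset_pow_right h1s hab)
  have hMdmono : ∀ {a b : ℕ}, a ≤ b → Md a ≤ Md b := fun hab =>
    Submodule.span_mono (Set.image2_subset (Set.pow_subset_pow_right h1s hab) subset_rfl)
  -- multiplication of filtration pieces
  have hRdmul : ∀ {a b : ℕ} {r r' : R}, r ∈ Rd a → r' ∈ Rd b → r * r' ∈ Rd (a + b) := by
    intro a b r r' hr hr'
    have := Submodule.mul_mem_mul hr hr'
    rwa [hRd, Submodule.span_mul_span, ← pow_add] at this
  -- smul of filtration pieces
  have hsmulMd1 : ∀ {a b : ℕ} {u : R}, u ∈ sset ^ a → ∀ z ∈ Md b, u • z ∈ Md (a + b) := by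
    intro a b u hu z hz
    induction hz using Submodule.span_induction with
    | mem w hw =>
      obtain ⟨u', hu', x, hx, rfl⟩ := hw
      rw [smul_smul]
      exact Submodule.subset_span
        (Set.mem_image2_of_mem (by rw [pow_add]; exact Set.mul_mem_mul hu hu') hx)
    | zero => rw [smul_zero]; exact zero_mem _
    | add x y _ _ hx hy => rw [smul_add]; exact add_mem hx hy
    | smul c x _ hx => rw [smul_comm]; exact Submodule.smul_mem _ _ hx
  have hsmulMd : ∀ {a b : ℕ} {r : R}, r ∈ Rd a → ∀ z ∈ Md b, r • z ∈ Md (a + b) := by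
    intro a b r hr z hz
    induction hr using Submodule.span_induction with
    | mem u hu => exact hsmulMd1 hu z hz
    | zero => rw [zero_smul]; exact zero_mem _
    | add x y _ _ hx hy => rw [add_smul]; exact add_mem hx hy
    | smul c x _ hx => rw [smul_assoc]; exact Submodule.smul_mem _ _ hx
  -- exhaustion on R
  have hclmono : ∀ u ∈ Submonoid.closure (↑G : Set R), ∃ d, u ∈ sset ^ d := by
    intro u hu
    induction hu using Submonoid.closure_induction with
    | mem g hg =>
      refine ⟨1, ?_⟩
      rw [pow_one, hsset, hsfin]
      exact Finset.mem_coe.mpr (Finset.mem_insert_of_mem (Finset.mem_coe.mp hg))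
    | one => exact ⟨0, by rw [pow_zero]; exact Set.mem_one.mpr rfl⟩
    | mul x y _ _ hx hy =>
      obtain ⟨d1, hd1⟩ := hx; obtain ⟨d2, hd2⟩ := hy
      exact ⟨d1 + d2, by rw [pow_add]; exact Set.mul_mem_mul hd1 hd2⟩
  have hexR : ∀ r : R, ∃ d, r ∈ Rd d := by
    intro r
    have hr : r ∈ Submodule.span k (↑(Submonoid.closure (↑G : Set R)) : Set R) := by
      rw [← Algebra.adjoin_eq_span, hGtop]; trivial
    induction hr using Submodule.span_induction with
    | mem u hu =>
      obtain ⟨d, hd⟩ := hclmono u hu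
      exact ⟨d, Submodule.subset_span hd⟩
    | zero => exact ⟨0, zero_mem _⟩
    | add x y _ _ hx hy =>
      obtain ⟨d1, hd1⟩ := hx; obtain ⟨d2, hd2⟩ := hy
      exact ⟨max d1 d2, add_mem (hRdmono (le_max_left _ _) hd1)
        (hRdmono (le_max_right _ _) hd2)⟩
    | smul c x _ hx =>
      obtain ⟨d1, hd1⟩ := hx
      exact ⟨d1, Submodule.smul_mem _ _ hd1⟩
  -- exhaustion on M
  have hXs0 : ∀ y ∈ Xs, y ∈ Md 0 := by
    intro y hy
    refine Submodule.subset_span ⟨1, ?_, y, hy, one_smul R y⟩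
    rw [pow_zero]; exact Set.mem_one.mpr rfl
  have hexM : ∀ z : M, ∃ d, z ∈ Md d := by
    intro z
    have hz : z ∈ Submodule.span R (↑Y1 : Set M) := by rw [hY1]; trivial
    induction hz using Submodule.span_induction with
    | mem y hy =>
      refine ⟨0, hXs0 y ?_⟩
      rw [hXs, hXf]
      exact Finset.mem_coe.mpr (Finset.mem_union_left _ (Finset.mem_coe.mp hy))
    | zero => exact ⟨0, zero_mem _⟩
    | add x y _ _ hx hy =>
      obtain ⟨d1, hd1⟩ := hx; obtain ⟨d2, hd2⟩ := hy
      exact ⟨max d1 d2, add_mem (hMdmono (le_max_left _ _) hd1)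
        (hMdmono (le_max_right _ _) hd2)⟩
    | smul a x _ hx =>
      obtain ⟨d1, hd1⟩ := hx
      obtain ⟨da, hda⟩ := hexR a
      exact ⟨da + d1, hsmulMd hda x hd1⟩
  -- products of powers of generators
  have hprodpow : ∀ (T : Finset R), (↑T : Set R) ⊆ sset → ∀ cc : R → ℕ,
      (∏ x ∈ T, x ^ cc x) ∈ sset ^ (∑ x ∈ T, cc x) := by
    intro T
    induction T using Finset.induction_on with
    | empty =>
      intro _ cc
      rw [Finset.prod_empty, Finset.sum_empty, pow_zero]
      exact Set.mem_one.mpr rfl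
    | insert _ _ hx ih =>
      intro hsub cc
      rw [Finset.prod_insert hx, Finset.sum_insert hx, pow_add]
      exact Set.mul_mem_mul
        (Set.pow_mem_pow (hsub (Finset.mem_coe.mpr (Finset.mem_insert_self _ _))))
        (ih (fun y hy => hsub (Finset.mem_coe.mpr
          (Finset.mem_insert_of_mem (Finset.mem_coe.mp hy)))) cc)
  -- finiteness of powers
  have hWfin : ∀ n : ℕ, (sset ^ n).Finite := by
    intro n; induction n with
    | zero => rw [pow_zero]; exact Set.finite_one
    | succ n ih => rw [pow_succ]; exact ih.mul (sfin.finite_toSet)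
  -- uniform bound for finite sets
  have hbddMd : ∀ (F : Set M), F.Finite → ∃ cf, ∀ y ∈ F, y ∈ Md cf := by
    intro F hF
    refine Set.Finite.induction_on _ hF ⟨0, by simp⟩ ?_
    intro y F' _ _ ih
    obtain ⟨cf, hcf⟩ := ih
    obtain ⟨dy, hdy⟩ := hexM y
    refine ⟨max dy cf, fun z hz => ?_⟩
    rcases Set.mem_insert_iff.mp hz with rfl | hz
    · exact hMdmono (le_max_left _ _) hdy
    · exact hMdmono (le_max_right _ _) (hcf z hz)
  -- spanning set of k over q-th powers
  obtain ⟨ι1, hι1, b1, hb1⟩ := aux_kspan p hkFF e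
  letI := hι1
  rw [← hq] at hb1
  -- the correction constant
  have hFsetfin : ((fun t : ι1 × R × M => C (b1 t.1 • (t.2.1 • t.2.2))) ''
      ((Set.univ : Set ι1) ×ˢ ((sset ^ (γ * q)) ×ˢ Xs))).Finite :=
    ((Set.finite_univ.prod ((hWfin _).prod (Xf.finite_toSet)))).image _
  obtain ⟨cF, hcF0⟩ := hbddMd _ hFsetfin
  have hcF : ∀ (i : ι1) (w : R), w ∈ sset ^ (γ * q) → ∀ x ∈ Xs,
      C (b1 i • (w • x)) ∈ Md cF := by
    intro i w hw x hx
    exact hcF0 _ ⟨(i, w, x), ⟨Set.mem_univ _, hw, hx⟩, rfl⟩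
  -- single contraction step
  have hStep : ∀ (d : ℕ) (z : M), z ∈ Md d → C z ∈ Md (d / q + cF) := by
    intro d z hz
    obtain ⟨cs, hsupp, hsum⟩ := Submodule.mem_span_set.mp hz
    rw [← hsum]
    have : (cs.sum fun mi r => r • mi) = ∑ v ∈ cs.support, cs v • v := rfl
    rw [this, aux_sum hCadd]
    refine sum_mem (fun v hv => ?_)
    obtain ⟨u, hu, x, hx, rfl⟩ := hsupp hv
    -- decompose u
    obtain ⟨a, vv, cc, hvv, hccQ, hueq, hsumd⟩ := aux_dec sfin q (by omega) d u hu
    have haq : a ≤ d / q := (Nat.le_div_iff_mul_le hq0).mpr (by omega)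
    set w : R := ∏ x ∈ sfin, x ^ cc x with hwdef
    have hwmem : w ∈ sset ^ (γ * q) := by
      refine Set.pow_subset_pow_right h1s ?_ (hprodpow sfin subset_rfl cc)
      have h1 : ∑ x ∈ sfin, cc x ≤ sfin.card • (q - 1) :=
        Finset.sum_le_card_nsmul _ _ _ (fun x _ => by have := hccQ x; omega)
      rw [smul_eq_mul] at h1
      have h2 : sfin.card * (q - 1) ≤ γ * q := by
        rw [hγ]; exact Nat.mul_le_mul_left _ (by omega)
      omega
    obtain ⟨g, hg⟩ := hb1 (cs (u • x))
    have hterm : ∀ i : ι1, (g i ^ q * b1 i) • ((vv ^ q * w) • x)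
        = ((g i • vv) ^ q) • (b1 i • (w • x)) := by
      intro i
      rw [halgsmul (g i ^ q * b1 i), halgsmul (b1 i)]
      simp only [smul_smul]
      congr 1
      rw [Algebra.smul_def, map_mul, map_pow]
      ring
    have hexp : (cs (u • x)) • (u • x)
        = ∑ i, ((g i • vv) ^ q) • (b1 i • (w • x)) := by
      rw [hg, hueq, Finset.sum_smul]
      exact Finset.sum_congr rfl fun i _ => hterm i
    rw [hexp, aux_sum hCadd]
    refine sum_mem (fun i _ => ?_)
    rw [hCsl]
    have h3 : C (b1 i • (w • x)) ∈ Md cF := hcF i w hwmem x hx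
    have h4 : (g i • vv) ∈ Rd a := Submodule.smul_mem _ _ (Submodule.subset_span hvv)
    exact hMdmono (by omega) (hsmulMd h4 _ h3)
  -- iterated contraction
  set c0 : ℕ := q * (cF + 1) with hc0
  have hcFc0 : cF ≤ c0 := by
    have : cF + 1 ≤ q * (cF + 1) := Nat.le_mul_of_pos_left _ hq0
    omega
  have hmStep : ∀ (mm d : ℕ) (z : M), z ∈ Md d → C^[mm] z ∈ Md (d / q ^ mm + 2 * c0) := by
    intro mm; induction mm with
    | zero =>
      intro d z hz
      rw [Function.iterate_zero_apply]
      exact hMdmono (by simp only [pow_zero, Nat.div_one]; omega) hz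
    | succ mm ih =>
      intro d z hz
      rw [Function.iterate_succ_apply']
      have h1 := hStep _ _ (ih d z hz)
      refine hMdmono ?_ h1
      have e1 : (d / q ^ mm + 2 * c0) / q = d / q ^ mm / q + 2 * (cF + 1) := by
        rw [hc0, show 2 * (q * (cF + 1)) = 2 * (cF + 1) * q by ring]
        exact Nat.add_mul_div_right _ _ hq0
      rw [e1, Nat.div_div_eq_div_mul, ← pow_succ]
      have h2 : 2 * (cF + 1) ≤ q * (cF + 1) := Nat.mul_le_mul_right _ hq2
      rw [hc0]
      omega
  -- degree of f
  obtain ⟨δ, hfδ⟩ := hexR f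
  have hfpow : ∀ n : ℕ, f ^ n ∈ Rd (n * δ) := by
    intro n; induction n with
    | zero =>
      rw [pow_zero, Nat.zero_mul]
      exact Submodule.subset_span (by rw [pow_zero]; exact Set.mem_one.mpr rfl)
    | succ n ih =>
      rw [pow_succ, Nat.succ_mul]
      exact hRdmul ih hfδ
  -- the uniform degree bound and the bound L
  set D : ℕ := γ + δ + 2 * c0 with hD
  have hfinT : (Set.image2 (· • ·) (sset ^ D) Xs).Finite :=
    Set.Finite.image2 _ (hWfin D) (Xf.finite_toSet)
  haveI hfdT : FiniteDimensional k ↥(Md D) := FiniteDimensional.span_of_finite k hfinT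
  refine ⟨Module.finrank k ↥(Md D), fun m hm => ?_⟩
  -- per-level setup
  have hQ0 : 0 < q ^ m := Nat.pow_pos hq0
  have hQm : q ^ m = p ^ (e * m) := by rw [hq, ← pow_mul]
  obtain ⟨ιm, hιm, bm, hbm⟩ := aux_kspan p hkFF (e * m)
  letI := hιm
  have hbm' : ∀ c : k, ∃ g : ιm → k, c = ∑ i, g i ^ q ^ m * bm i := by
    intro c; obtain ⟨g, hg⟩ := hbm c
    exact ⟨g, by rw [hg, hQm]⟩
  set Sn : ℕ → Set M := fun n => C^[m] '' (f ^ n • (N : Set M)) with hSnd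
  have hnu : ∀ n : ℕ, n ∈ nuLevel C f (N : Set M) m ↔ Sn n ≠ Sn (n + 1) := by
    intro n; rw [hSnd]; exact Iff.rfl
  -- Sn n is a submodule
  have hWn : ∀ n : ℕ, ∃ W : Submodule R M, (W : Set M) = Sn n := by
    intro n
    refine ⟨{ carrier := Sn n, add_mem' := ?_, zero_mem' := ?_, smul_mem' := ?_ }, rfl⟩
    · rintro a b ⟨za, hza, rfl⟩ ⟨zb, hzb, rfl⟩
      obtain ⟨xa, hxa, rfl⟩ := hza
      obtain ⟨xb, hxb, rfl⟩ := hzb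
      refine ⟨f ^ n • (xa + xb), Set.smul_mem_smul_set (N.add_mem hxa hxb), ?_⟩
      rw [smul_add, aux_iter_add hCadd]
    · exact ⟨f ^ n • 0, Set.smul_mem_smul_set N.zero_mem,
        by rw [smul_zero]; exact aux_iter_zero hCadd m⟩
    · rintro r a ⟨za, hza, rfl⟩
      obtain ⟨xa, hxa, rfl⟩ := hza
      refine ⟨f ^ n • (r ^ q ^ m • xa),
        Set.smul_mem_smul_set (N.smul_mem _ hxa), ?_⟩
      rw [← aux_iter_sl hCsl m r (f ^ n • xa)]
      congr 1
      rw [smul_smul, smul_smul, mul_comm]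
  choose W hWcoe using hWn
  -- monotonicity of the chain
  have hSmono : ∀ n : ℕ, Sn (n + 1) ⊆ Sn n := by
    intro n z hz
    obtain ⟨w, hw, rfl⟩ := hz
    obtain ⟨x, hx, rfl⟩ := hw
    refine ⟨f ^ n • (f • x), Set.smul_mem_smul_set (N.smul_mem f hx), ?_⟩
    congr 1
    rw [smul_smul, ← pow_succ]
  have hSmonole : ∀ {a b : ℕ}, a ≤ b → Sn b ⊆ Sn a := by
    intro a b hab
    induction hab with
    | refl => exact subset_rfl
    | step _ ih => exact fun z hz => ih (hSmono _ hz)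
  -- decomposition of ring elements at level q^m
  set genQ : Set R := {x : R | ∃ sR tR : R, tR ∈ Rd (γ * q ^ m) ∧ x = sR ^ q ^ m * tR}
    with hgenQd
  have hdecR : ∀ r : R, r ∈ AddSubmonoid.closure genQ := by
    intro r
    obtain ⟨d, hr⟩ := hexR r
    obtain ⟨cs, hsupp, hsum⟩ := Submodule.mem_span_set.mp hr
    rw [← hsum]
    have : (cs.sum fun mi r => r • mi) = ∑ u ∈ cs.support, cs u • u := rfl
    rw [this]
    refine AddSubmonoid.sum_mem _ (fun u hu => ?_)
    have huu : u ∈ sset ^ d := hsupp hu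
    obtain ⟨a, v, cc, hv, hccQ, hueq, hsumd⟩ := aux_dec sfin (q ^ m) hQ0 d u huu
    obtain ⟨g, hg⟩ := hbm' (cs u)
    have hwmem : (∏ x ∈ sfin, x ^ cc x) ∈ sset ^ (γ * q ^ m) := by
      refine Set.pow_subset_pow_right h1s ?_ (hprodpow sfin subset_rfl cc)
      have h1 : ∑ x ∈ sfin, cc x ≤ sfin.card • (q ^ m - 1) :=
        Finset.sum_le_card_nsmul _ _ _ (fun x _ => by have := hccQ x; omega)
      rw [smul_eq_mul] at h1
      have h2 : sfin.card * (q ^ m - 1) ≤ γ * q ^ m := by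
        rw [hγ]; exact Nat.mul_le_mul_left _ (by omega)
      omega
    have hterm : ∀ i : ιm, (g i ^ q ^ m * bm i) • (v ^ q ^ m * ∏ x ∈ sfin, x ^ cc x)
        = (g i • v) ^ q ^ m * (bm i • ∏ x ∈ sfin, x ^ cc x) := by
      intro i
      rw [Algebra.smul_def, Algebra.smul_def, Algebra.smul_def, map_mul, map_pow]
      ring
    have hrw : cs u • u = ∑ i, (g i • v) ^ q ^ m * (bm i • ∏ x ∈ sfin, x ^ cc x) := by
      rw [hg, hueq, Finset.sum_smul]
      exact Finset.sum_congr rfl fun i _ => hterm i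
    rw [hrw]
    refine AddSubmonoid.sum_mem _ (fun i _ => ?_)
    refine AddSubmonoid.subset_closure ⟨g i • v, bm i • ∏ x ∈ sfin, x ^ cc x, ?_, rfl⟩
    exact Submodule.smul_mem _ _ (Submodule.subset_span hwmem)
  -- the generation lemma
  have h1Rd : (1 : R) ∈ Rd (γ * q ^ m) :=
    Submodule.subset_span (Set.one_mem_pow h1s)
  have hkey : ∀ n : ℕ, n ≤ q ^ m → ∀ x ∈ N, ∀ t ∈ Rd (γ * q ^ m),
      C^[m] ((t * f ^ n) • x) ∈ Submodule.span R (Sn n ∩ (Md D : Set M)) := by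
    intro n hn x hx
    have hx' : x ∈ Submodule.span R (↑Y2 : Set M) := by rw [hY2]; exact hx
    clear hx
    induction hx' using Submodule.span_induction with
    | mem y hy =>
      intro t ht
      have hyN : y ∈ N := by rw [← hY2]; exact Submodule.subset_span hy
      have h1 : y ∈ Md 0 := hXs0 y (by
        rw [hXs, hXf]
        exact Finset.mem_coe.mpr (Finset.mem_union_right _ (Finset.mem_coe.mp hy)))
      have h2 : (f ^ n) • y ∈ Md (n * δ + 0) := hsmulMd (hfpow n) _ h1
      have h3 : (t * f ^ n) • y ∈ Md (γ * q ^ m + (n * δ + 0)) := by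
        rw [mul_smul]; exact hsmulMd ht _ h2
      have h4 := hmStep m _ _ h3
      have h5 : (γ * q ^ m + (n * δ + 0)) / q ^ m + 2 * c0 ≤ D := by
        rw [add_zero, add_comm (γ * q ^ m), Nat.add_mul_div_right _ _ hQ0]
        have e2 : n * δ / q ^ m ≤ δ := by
          calc n * δ / q ^ m ≤ q ^ m * δ / q ^ m :=
                Nat.div_le_div_right (Nat.mul_le_mul_right δ hn)
          _ = δ := Nat.mul_div_cancel_left δ hQ0
        rw [hD]; omega
      have h6 : C^[m] ((t * f ^ n) • y) ∈ Md D := hMdmono h5 h4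
      have h7 : C^[m] ((t * f ^ n) • y) ∈ Sn n := by
        refine ⟨f ^ n • (t • y), Set.smul_mem_smul_set (N.smul_mem t hyN), ?_⟩
        congr 1
        rw [smul_smul, mul_comm]
      exact Submodule.subset_span ⟨h7, h6⟩
    | zero =>
      intro t ht
      rw [smul_zero, aux_iter_zero hCadd]
      exact zero_mem _
    | add x1 x2 _ _ ih1 ih2 =>
      intro t ht
      rw [smul_add, aux_iter_add hCadd]
      exact add_mem (ih1 t ht) (ih2 t ht)
    | smul a x1 _ ih =>
      intro t ht
      have heq : (t * f ^ n) • (a • x1) = ((t * a) * f ^ n) • x1 := by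
        rw [smul_smul]
        congr 1
        ring
      rw [heq]
      generalize t * a = ra
      have hmem := hdecR ra
      induction hmem using AddSubmonoid.closure_induction with
      | mem r hr =>
        obtain ⟨sR, tR, htR, rfl⟩ := hr
        have h8 : (sR ^ q ^ m * tR * f ^ n) • x1 = sR ^ q ^ m • ((tR * f ^ n) • x1) := by
          rw [smul_smul, mul_assoc]
        rw [h8, aux_iter_sl hCsl m]
        exact Submodule.smul_mem _ _ (ih tR htR)
      | zero =>
        rw [zero_mul, zero_smul, aux_iter_zero hCadd]
        exact zero_mem _
      | add r1 r2 _ _ ihr1 ihr2 =>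
        rw [add_mul, add_smul, aux_iter_add hCadd]
        exact add_mem ihr1 ihr2
  have hgen : ∀ n : ℕ, n ≤ q ^ m →
      Sn n ⊆ (Submodule.span R (Sn n ∩ (Md D : Set M)) : Set M) := by
    intro n hn z hz
    obtain ⟨w, hw, rfl⟩ := hz
    obtain ⟨x, hx, rfl⟩ := hw
    have := hkey n hn x hx 1 h1Rd
    rwa [one_mul] at this
  -- comparison submodules inside the finite-dimensional piece
  set Kn : ℕ → Submodule k ↥(Md D) := fun n =>
    Submodule.comap (Md D).subtype (Submodule.restrictScalars k (W n) ⊓ Md D) with hKnd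
  have hWmono : ∀ {a b : ℕ}, a ≤ b → W b ≤ W a := by
    intro a b hab
    rw [← SetLike.coe_subset_coe, hWcoe, hWcoe]
    exact hSmonole hab
  have hKmono : ∀ {a b : ℕ}, a ≤ b → Kn b ≤ Kn a := by
    intro a b hab
    refine Submodule.comap_mono (inf_le_inf_right _ ?_)
    exact fun x hx => hWmono hab hx
  have hKlt : ∀ n, n < q ^ m → Sn n ≠ Sn (n + 1) → Kn (n + 1) < Kn n := by
    intro n hn hne
    refine lt_of_le_of_ne (hKmono (Nat.le_succ n)) (fun hEq => hne ?_)
    have e1 : ∀ (X : Submodule k M), Md D ⊓ (X ⊓ Md D) = X ⊓ Md D :=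
      fun X => inf_eq_right.mpr inf_le_right
    have h2 := congrArg (Submodule.map (Md D).subtype) hEq
    rw [hKnd] at h2
    rw [Submodule.map_comap_subtype, Submodule.map_comap_subtype, e1, e1] at h2
    have hset1 : ∀ j : ℕ, (Sn j ∩ (Md D : Set M))
        = ↑(Submodule.restrictScalars k (W j) ⊓ Md D) := by
      intro j
      rw [Submodule.coe_inf, Submodule.coe_restrictScalars, hWcoe]
    refine Set.Subset.antisymm ?_ (hSmono n)
    calc Sn n ⊆ (Submodule.span R (Sn n ∩ (Md D : Set M)) : Set M) := hgen n (le_of_lt hn)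
    _ = (Submodule.span R (Sn (n + 1) ∩ (Md D : Set M)) : Set M) := by
        rw [hset1, hset1, h2]
    _ ⊆ (Submodule.span R (Sn (n + 1)) : Set M) :=
        SetLike.coe_subset_coe.mpr (Submodule.span_mono Set.inter_subset_left)
    _ = Sn (n + 1) := by rw [← hWcoe (n + 1), Submodule.span_eq]
  -- rank counting
  set gr : ℕ → ℕ := fun n => Module.finrank k ↥(Kn n) with hgrd
  have hganti : ∀ {a b : ℕ}, a ≤ b → gr b ≤ gr a := fun hab =>
    Submodule.finrank_mono (hKmono hab)
  have hgd : ∀ n, n < q ^ m → Sn n ≠ Sn (n + 1) → gr (n + 1) < gr n :=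
    fun n h1 h2 => Submodule.finrank_lt_finrank_of_lt (hKlt n h1 h2)
  have hgtop : gr 0 ≤ Module.finrank k ↥(Md D) := Submodule.finrank_le _
  -- conclusion
  set A : Set ℕ := {n | n < q ^ m ∧ Sn n ≠ Sn (n + 1)} with hA
  have hAmem : ∀ a : ℕ, a ∈ A → a < q ^ m ∧ Sn a ≠ Sn (a + 1) := fun a ha => ha
  have hAeq : {n : ℕ | n < q ^ m ∧ n ∈ nuLevel C f (N : Set M) m} = A := by
    ext n
    simp only [hA, Set.mem_setOf_eq]
    exact and_congr_right fun _ => by rw [hnu n]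
  rw [hAeq]
  have hkey2 : ∀ a ∈ A, ∀ b ∈ A, a < b → gr (b + 1) < gr (a + 1) := by
    intro a _ b hb hab
    calc gr (b + 1) < gr b := hgd b (hAmem b hb).1 (hAmem b hb).2
    _ ≤ gr (a + 1) := hganti (by omega)
  have hinj : Set.InjOn (fun n => gr (n + 1)) A := by
    intro a ha b hb hab
    rcases lt_trichotomy a b with h | h | h
    · refine absurd hab ?_
      have h1 := hkey2 a ha b hb h
      show ¬ gr (a + 1) = gr (b + 1)
      omega
    · exact h
    · refine absurd hab ?_
      have h1 := hkey2 b hb a ha h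
      show ¬ gr (a + 1) = gr (b + 1)
      omega
  have himg : (fun n => gr (n + 1)) '' A ⊆ Set.Iio (gr 0) := by
    rintro _ ⟨n, hn, rfl⟩
    exact lt_of_lt_of_le (hgd n (hAmem n hn).1 (hAmem n hn).2) (hganti (Nat.zero_le n))
  calc A.ncard = ((fun n => gr (n + 1)) '' A).ncard := (Set.ncard_image_of_injOn hinj).symm
  _ ≤ (Set.Iio (gr 0)).ncard := Set.ncard_le_ncard himg (Set.finite_Iio _)
  _ = gr 0 := by rw [← Finset.coe_range, Set.ncard_coe_finset, Finset.card_range]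
  _ ≤ Module.finrank k ↥(Md D) := hgtop
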